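/- Define a linear order < on the positive roots R⁺ of type C_n as follows: group the roots by their smallest index i (i.e., the roots ε_i − ε_j (i<j), 2ε_i, ε_i + ε_j (i<j)), order the groups by increasing i, and within the group of index i set ε_i − ε_{i+1} < ε_i − ε_{i+2} < ⋯ < ε_i − ε_n < 2ε_i < ε_i + ε_n < ε_i + ε_{n−1} < ⋯ < ε_i + ε_{i+1}. Then this order is convex: for all β, γ ∈ R⁺ with β < γ and β + γ ∈ R⁺, one has β < β + γ < γ. -/
import Mathlib


/-- The positive roots of type `C_n`: `ε_i - ε_j` and `ε_i + ε_j` for `i < j`, and `2ε_i`. -/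
inductive CnRoot (n : ℕ) where
  | sub (i j : Fin n) (h : i < j)
  | dbl (i : Fin n)
  | add (i j : Fin n) (h : i < j)

/-- The vector in `ℝ^n` corresponding to a positive root of type `C_n`. -/
def CnRoot.toVec {n : ℕ} : CnRoot n → (Fin n → ℝ)
  | .sub i j _ => Pi.single i 1 - Pi.single j 1
  | .dbl i => (2 : ℝ) • (Pi.single i 1 : Fin n → ℝ)
  | .add i j _ => Pi.single i 1 + Pi.single j 1

/-- The rank function realizing the order: roots are grouped by their smallest index `i`
(groups ordered by increasing `i`), and within the group of index `i` the order is
`ε_i - ε_{i+1} < ⋯ < ε_i - ε_n < 2ε_i < ε_i + ε_n < ⋯ < ε_i + ε_{i+1}`. -/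
def CnRoot.key {n : ℕ} : CnRoot n → ℕ
  | .sub i j _ => i.val * (2 * n) + j.val
  | .dbl i => i.val * (2 * n) + n
  | .add i j _ => i.val * (2 * n) + (2 * n - j.val)

set_option linter.unusedTactic false
set_option linter.unreachableTactic false
set_option linter.unnecessarySeqFocus false

lemma key_lt_of {n x y o p : ℕ} (ho : o < 2*n) (h : x < y ∨ (x = y ∧ o < p)) :
    x*(2*n)+o < y*(2*n)+p := by
  rcases h with h | ⟨rfl, h⟩
  · have h1 : (x+1)*(2*n) ≤ y*(2*n) := Nat.mul_le_mul_right _ h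
    rw [add_mul, one_mul] at h1
    have := Nat.zero_le p
    linarith
  · linarith

lemma subApply {n : ℕ} (i j : Fin n) (h : i < j) (x : Fin n) :
    (CnRoot.sub i j h).toVec x = (if x = i then (1:ℝ) else 0) - (if x = j then 1 else 0) := by
  simp [CnRoot.toVec, Pi.single_apply]

lemma dblApply {n : ℕ} (i : Fin n) (x : Fin n) :
    (CnRoot.dbl i).toVec x = (if x = i then (2:ℝ) else 0) := by
  simp [CnRoot.toVec, Pi.single_apply, mul_ite]

lemma addApply {n : ℕ} (i j : Fin n) (h : i < j) (x : Fin n) :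
    (CnRoot.add i j h).toVec x = (if x = i then (1:ℝ) else 0) + (if x = j then 1 else 0) := by
  simp [CnRoot.toVec, Pi.single_apply]

lemma key_elim {n x y o p : ℕ} (ho : o < 2*n) (hp : p < 2*n) (h : x*(2*n)+o = y*(2*n)+p) :
    x = y ∧ o = p := by
  have hxy : x = y := by
    rcases Nat.lt_trichotomy x y with h'|h'|h'
    · exact absurd h (ne_of_lt (key_lt_of ho (Or.inl h')))
    · exact h'
    · exact absurd h (ne_of_gt (key_lt_of hp (Or.inl h')))
  subst hxy
  exact ⟨rfl, Nat.add_left_cancel h⟩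

lemma sumSub {n : ℕ} (i j : Fin n) (h : i < j) : ∑ x, (CnRoot.sub i j h).toVec x = 0 := by
  simp [subApply i j h, Finset.sum_sub_distrib]

lemma sumDbl {n : ℕ} (i : Fin n) : ∑ x, (CnRoot.dbl i).toVec x = 2 := by
  simp [dblApply i]

lemma sumAdd {n : ℕ} (i j : Fin n) (h : i < j) : ∑ x, (CnRoot.add i j h).toVec x = 2 := by
  simp [addApply i j h, Finset.sum_add_distrib]
  norm_num

/-- The order on the positive roots of type `C_n` given by `CnRoot.key` is a linear
order (the key function is injective) and it is convex: whenever `β < γ` and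
`β + γ` is again a positive root, one has `β < β + γ < γ`. -/
theorem convex_order_typeC (n : ℕ) :
    Function.Injective (CnRoot.key (n := n)) ∧
    ∀ a b c : CnRoot n, a.key < b.key → c.toVec = a.toVec + b.toVec →
      a.key < c.key ∧ c.key < b.key := by
  constructor
  · intro a b h
    obtain ⟨i1,j1,h1⟩|i1|⟨i1,j1,h1⟩ := a <;> obtain ⟨i2,j2,h2⟩|i2|⟨i2,j2,h2⟩ := b <;>
        simp only [CnRoot.key] at h
    · have h1' : i1.val < j1.val := h1
      have h2' : i2.val < j2.val := h2
      have := j1.isLt; have := j2.isLt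
      obtain ⟨e1, e2⟩ := key_elim (by omega) (by omega) h
      have : i1 = i2 := Fin.val_injective e1
      have : j1 = j2 := Fin.val_injective e2
      subst this; subst ‹i1 = i2›; rfl
    · have h1' : i1.val < j1.val := h1
      have := j1.isLt; have := i2.isLt
      obtain ⟨e1, e2⟩ := key_elim (by omega) (by omega) h
      omega
    · have h1' : i1.val < j1.val := h1
      have h2' : i2.val < j2.val := h2
      have := j1.isLt; have := j2.isLt
      obtain ⟨e1, e2⟩ := key_elim (by omega) (by omega) h
      omega
    · have h2' : i2.val < j2.val := h2
      have := i1.isLt; have := j2.isLt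
      obtain ⟨e1, e2⟩ := key_elim (by omega) (by omega) h
      omega
    · have := i1.isLt
      obtain ⟨e1, e2⟩ := key_elim (by omega) (by omega) h
      have : i1 = i2 := Fin.val_injective e1
      subst this; rfl
    · have h2' : i2.val < j2.val := h2
      have := i1.isLt; have := j2.isLt
      obtain ⟨e1, e2⟩ := key_elim (by omega) (by omega) h
      omega
    · have h1' : i1.val < j1.val := h1
      have h2' : i2.val < j2.val := h2
      have := j1.isLt; have := j2.isLt
      obtain ⟨e1, e2⟩ := key_elim (by omega) (by omega) h
      omega
    · have h1' : i1.val < j1.val := h1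
      have := j1.isLt; have := i2.isLt
      obtain ⟨e1, e2⟩ := key_elim (by omega) (by omega) h
      omega
    · have h1' : i1.val < j1.val := h1
      have h2' : i2.val < j2.val := h2
      have := j1.isLt; have := j2.isLt
      obtain ⟨e1, e2⟩ := key_elim (by omega) (by omega) h
      have : j1 = j2 := Fin.val_injective (by omega)
      have : i1 = i2 := Fin.val_injective e1
      subst this; subst ‹j1 = j2›; rfl
  · intro a b c hab hc
    obtain ⟨i1,j1,h1⟩|i1|⟨i1,j1,h1⟩ := a <;>
      obtain ⟨i2,j2,h2⟩|i2|⟨i2,j2,h2⟩ := b <;>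
      obtain ⟨i3,j3,h3⟩|i3|⟨i3,j3,h3⟩ := c <;>
      [skip; skip; skip; skip; skip; skip; skip; skip; skip; skip; skip; skip; skip;
       skip; skip; skip; skip; skip; skip; skip; skip; skip; skip; skip; skip; skip; skip]
    all_goals try {
      exfalso
      have S := congrArg (fun f : Fin n → ℝ => ∑ x, f x) hc
      simp only [Pi.add_apply, Finset.sum_add_distrib, sumSub, sumDbl, sumAdd] at S
      norm_num at S }
    · have H := fun p => congrFun hc p
      simp only [Pi.add_apply, subApply, dblApply, addApply] at H
      have hne1 : i1 ≠ j1 := ne_of_lt h1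
      have hne2 : i2 ≠ j2 := ne_of_lt h2
      have hne3 : i3 ≠ j3 := ne_of_lt h3
      by_cases c12 : i1 = i2
      · exfalso
        have E := H i1
        have hne1' : i2 ≠ j1 := fun hh => hne1 (c12.trans hh)
        simp [hne1, hne1', c12, ne_of_lt h2] at E
        split_ifs at E <;> norm_num at E
      · by_cases cj : j1 = i2
        · subst cj
          have e13 : i1 = i3 := by
            by_contra hx
            have E := H i1
            simp [hne1, hx, ne_of_lt (h1.trans h2)] at E
            split_ifs at E <;> norm_num at E
          subst e13
          have e33 : j2 = j3 := by
            by_contra hx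
            have E := H j2
            simp [hx, (ne_of_lt (h1.trans h2)).symm, (ne_of_lt h2).symm] at E
          subst e33
          simp only [CnRoot.key]
          have v1 := j1.isLt; have v2 := j2.isLt
          have h1' : i1.val < j1.val := h1
          have h2' : j1.val < j2.val := h2
          exact ⟨key_lt_of (by omega) (Or.inr ⟨rfl, by omega⟩),
                 key_lt_of (by omega) (Or.inl (by omega))⟩
        · by_cases cji : j2 = i1
          · exfalso
            subst cji
            simp only [CnRoot.key] at hab
            have v1 := j2.isLt
            have h2' : i2.val < j2.val := h2
            exact lt_asymm (key_lt_of (by omega) (Or.inl (by omega))) hab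
          · exfalso
            have e13 : i1 = i3 := by
              by_contra hx
              have E := H i1
              simp [hne1, hx, c12, Ne.symm cji] at E
              split_ifs at E <;> norm_num at E
            have e23 : i2 = i3 := by
              by_contra hx
              have E := H i2
              simp [hne2, hx, Ne.symm c12, Ne.symm cj] at E
              split_ifs at E <;> norm_num at E
            exact c12 (e13.trans e23.symm)
    · exfalso
      have H := fun p => congrFun hc p
      simp only [Pi.add_apply, subApply, dblApply, addApply] at H
      have E := H i1
      simp [ne_of_lt h1] at E
      split_ifs at E <;> norm_num at E
      
      -- case3: a=sub i1 j1, b=dbl i2, c=add i3 j3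
    · have H := fun p => congrFun hc p
      simp only [Pi.add_apply, subApply, dblApply, addApply] at H
      have hne1 : i1 ≠ j1 := ne_of_lt h1
      have hne3 : i3 ≠ j3 := ne_of_lt h3
      have ei : j1 = i2 := by
        by_contra hx
        have E := H j1
        simp [hne1.symm, hx] at E
        split_ifs at E <;> norm_num at E
      subst ei
      have d1 : i1 = i3 ∨ i1 = j3 := by
        by_contra hx
        push_neg at hx
        have E := H i1
        simp [hne1, hx.1, hx.2] at E <;> norm_num at E
      have d2 : j1 = i3 ∨ j1 = j3 := by
        by_contra hx
        push_neg at hx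
        have E := H j1
        simp [hne1.symm, hx.1, hx.2] at E <;> norm_num at E
      have h1' : i1.val < j1.val := h1
      have h3' : i3.val < j3.val := h3
      obtain ⟨e1, e2⟩ : i1 = i3 ∧ j1 = j3 := by
        rcases d1 with d1 | d1 <;> rcases d2 with d2 | d2 <;>
          first
            | exact ⟨d1, d2⟩
            | (exfalso;
               have a1 := congrArg Fin.val d1; have a2 := congrArg Fin.val d2; omega)
      subst e1; subst e2
      simp only [CnRoot.key]
      have v1 := i1.isLt; have v2 := j1.isLt
      exact ⟨key_lt_of (by omega) (Or.inr ⟨rfl, by omega⟩),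
             key_lt_of (by omega) (Or.inl (by omega))⟩
      
      -- case4: a=dbl i1, b=sub i2 j2, c=dbl i3 : impossible
    · have H := fun p => congrFun hc p
      simp only [Pi.add_apply, subApply, dblApply, addApply] at H
      have hne1 : i1 ≠ j1 := ne_of_lt h1
      have hne2 : i2 ≠ j2 := ne_of_lt h2
      have hd : j1 = i2 ∨ j1 = j2 := by
        by_contra hx
        push_neg at hx
        have E := H j1
        simp [hne1.symm, hx.1, hx.2] at E <;> split_ifs at E <;> norm_num at E
      rcases hd with hd | hd
      · exfalso
        subst hd
        have E := H i1
        simp [hne1, ne_of_lt (h1.trans h2)] at E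
        split_ifs at E <;> norm_num at E
      · subst hd
        have hii : i2 = i1 := by
          by_contra hx
          have E := H i1
          simp [hne1, Ne.symm hx] at E
          split_ifs at E <;> norm_num at E
        subst hii
        have e3 : i2 = i3 := by
          by_contra hx
          have E := H i2
          simp [hne1, hx] at E <;> norm_num at E
        subst e3
        simp only [CnRoot.key]
        have v1 := i2.isLt; have v2 := j1.isLt
        have h1' : i2.val < j1.val := h1
        exact ⟨key_lt_of (by omega) (Or.inr ⟨rfl, by omega⟩),
               key_lt_of (by omega) (Or.inr ⟨rfl, by omega⟩)⟩
      
      -- case7: a=sub i1 j1, b=add i2 j2, c=add i3 j3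
    · have H := fun p => congrFun hc p
      simp only [Pi.add_apply, subApply, dblApply, addApply] at H
      have hne1 : i1 ≠ j1 := ne_of_lt h1
      have hne2 : i2 ≠ j2 := ne_of_lt h2
      have hne3 : i3 ≠ j3 := ne_of_lt h3
      have hd : j1 = i2 ∨ j1 = j2 := by
        by_contra hx
        push_neg at hx
        have E := H j1
        simp [hne1.symm, hx.1, hx.2] at E <;> split_ifs at E <;> norm_num at E
      rcases hd with hd | hd
      · -- j1 = i2, c = add i1 j2
        subst hd
        have d1 : i1 = i3 ∨ i1 = j3 := by
          by_contra hx
          push_neg at hx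
          have E := H i1
          simp [hne1, hx.1, hx.2, ne_of_lt (h1.trans h2)] at E <;> norm_num at E
        have d2 : j2 = i3 ∨ j2 = j3 := by
          by_contra hx
          push_neg at hx
          have E := H j2
          simp [hne2.symm, hx.1, hx.2, (ne_of_lt (h1.trans h2)).symm] at E <;> norm_num at E
        have h1' : i1.val < j1.val := h1
        have h2' : j1.val < j2.val := h2
        have h3' : i3.val < j3.val := h3
        obtain ⟨e1, e2⟩ : i1 = i3 ∧ j2 = j3 := by
          rcases d1 with d1 | d1 <;> rcases d2 with d2 | d2 <;>
            first
              | exact ⟨d1, d2⟩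
              | (exfalso;
                 have a1 := congrArg Fin.val d1; have a2 := congrArg Fin.val d2; omega)
        subst e1; subst e2
        simp only [CnRoot.key]
        have v1 := j1.isLt; have v2 := j2.isLt
        exact ⟨key_lt_of (by omega) (Or.inr ⟨rfl, by omega⟩),
               key_lt_of (by omega) (Or.inl (by omega))⟩
      · -- j1 = j2
        subst hd
        by_cases hii : i1 = i2
        · exfalso
          have E := H i1
          simp [hne1, hii] at E
          split_ifs at E with hA hB
          · exact hne3 (hA.symm.trans hB)
          all_goals norm_num at E
        · have d1 : i1 = i3 ∨ i1 = j3 := by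
            by_contra hx
            push_neg at hx
            have E := H i1
            simp [hne1, hii, hx.1, hx.2] at E <;> norm_num at E
          have d2 : i2 = i3 ∨ i2 = j3 := by
            by_contra hx
            push_neg at hx
            have E := H i2
            simp [Ne.symm hii, ne_of_lt h2, hx.1, hx.2] at E <;> norm_num at E
          have h1' : i1.val < j1.val := h1
          have h2' : i2.val < j1.val := h2
          have h3' : i3.val < j3.val := h3
          have v1 := j1.isLt; have v2 := i2.isLt; have v3 := i1.isLt
          rcases d1 with d1 | d1 <;> rcases d2 with d2 | d2
          · -- i1 = i3, i2 = i3 : contradiction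
            exact absurd (d1.trans d2.symm) hii
          · -- i1 = i3, i2 = j3 : main case
            subst d1; subst d2
            simp only [CnRoot.key]
            have a3 : i1.val < i2.val := h3
            exact ⟨key_lt_of (by omega) (Or.inr ⟨rfl, by omega⟩),
                   key_lt_of (by omega) (Or.inl (by omega))⟩
          · -- i1 = j3, i2 = i3 : contradicts hab
            exfalso
            subst d1; subst d2
            simp only [CnRoot.key] at hab
            have a3 : i2.val < i1.val := h3
            exact lt_asymm (key_lt_of (by omega) (Or.inl (by omega))) hab
          · exact absurd (d1.trans d2.symm) hii
    · exfalso
      have H := fun p => congrFun hc p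
      simp only [Pi.add_apply, subApply, dblApply, addApply] at H
      have E := H i2
      simp [ne_of_lt h2] at E
      split_ifs at E <;> norm_num at E
      
      -- case5: a=dbl i1, b=sub i2 j2, c=add i3 j3 : contradiction with hab
    · exfalso
      have H := fun p => congrFun hc p
      simp only [Pi.add_apply, subApply, dblApply, addApply] at H
      have ei : i1 = j2 := by
        by_contra hx
        have E := H j2
        simp [(ne_of_lt h2).symm, Ne.symm hx] at E
        split_ifs at E <;> norm_num at E
      subst ei
      simp only [CnRoot.key] at hab
      have v1 := i1.isLt
      have h2' : i2.val < i1.val := h2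
      exact lt_asymm (key_lt_of (by omega) (Or.inl (by omega))) hab
    · exfalso
      have H := fun p => congrFun hc p
      simp only [Pi.add_apply, subApply, dblApply, addApply] at H
      have hne1 : i1 ≠ j1 := ne_of_lt h1
      have hne2 : i2 ≠ j2 := ne_of_lt h2
      have hd : j2 = i1 ∨ j2 = j1 := by
        by_contra hx
        push_neg at hx
        have E := H j2
        simp [hne2.symm, hx.1, hx.2] at E <;> split_ifs at E <;> norm_num at E
      rcases hd with hd | hd
      · subst hd
        -- a=add i1 j1, b=sub i2 i1, i2 < i1 < j1
        have E := H j1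
        simp [hne1.symm, (ne_of_lt (h2.trans h1)).symm] at E
        split_ifs at E <;> norm_num at E
      · subst hd
        -- b = sub i2 j1, i2 < j1
        have hii : i1 = i2 := by
          by_contra hx
          have E := H i1
          simp [hne1, hx] at E
          split_ifs at E <;> norm_num at E
        subst hii
        simp only [CnRoot.key] at hab
        have v1 := j2.isLt
        have h1' : i1.val < j2.val := h1
        have hB : j2.val < 2*n - j2.val := by omega
        omega
      
      -- case9: a=add i1 j1, b=sub i2 j2, c=add i3 j3
    · have H := fun p => congrFun hc p
      simp only [Pi.add_apply, subApply, dblApply, addApply] at H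
      have hne1 : i1 ≠ j1 := ne_of_lt h1
      have hne2 : i2 ≠ j2 := ne_of_lt h2
      have hne3 : i3 ≠ j3 := ne_of_lt h3
      have hd : j2 = i1 ∨ j2 = j1 := by
        by_contra hx
        push_neg at hx
        have E := H j2
        simp [hne2.symm, hx.1, hx.2] at E <;> split_ifs at E <;> norm_num at E
      rcases hd with hd | hd
      · -- j2 = i1 : contradicts hab
        exfalso
        subst hd
        simp only [CnRoot.key] at hab
        have v1 := j2.isLt
        have h2' : i2.val < j2.val := h2
        exact lt_asymm (key_lt_of (by omega) (Or.inl (by omega))) hab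
      · -- j2 = j1
        subst hd
        by_cases hii : i1 = i2
        · exfalso
          have E := H i1
          simp [hne1, hii] at E
          split_ifs at E with hA hB
          · exact hne3 (hA.symm.trans hB)
          all_goals norm_num at E
        · have d1 : i1 = i3 ∨ i1 = j3 := by
            by_contra hx
            push_neg at hx
            have E := H i1
            simp [hne1, hii, hx.1, hx.2] at E <;> norm_num at E
          have d2 : i2 = i3 ∨ i2 = j3 := by
            by_contra hx
            push_neg at hx
            have E := H i2
            simp [Ne.symm hii, ne_of_lt h2, hx.1, hx.2] at E <;> norm_num at E
          have h1' : i1.val < j2.val := h1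
          have h2' : i2.val < j2.val := h2
          have h3' : i3.val < j3.val := h3
          have v1 := j2.isLt; have v2 := i2.isLt; have v3 := i1.isLt
          rcases d1 with d1 | d1 <;> rcases d2 with d2 | d2
          · exact absurd (d1.trans d2.symm) hii
          · -- i1 = i3, i2 = j3 : main case
            subst d1; subst d2
            simp only [CnRoot.key]
            have a3 : i1.val < i2.val := h3
            exact ⟨key_lt_of (by omega) (Or.inr ⟨rfl, by omega⟩),
                   key_lt_of (by omega) (Or.inl (by omega))⟩
          · -- i1 = j3, i2 = i3 : contradicts hab
            exfalso
            subst d1; subst d2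
            simp only [CnRoot.key] at hab
            have a3 : i2.val < i1.val := h3
            exact lt_asymm (key_lt_of (by omega) (Or.inl (by omega))) hab
          · exact absurd (d1.trans d2.symm) hii
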